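/- Let o = (5/8, 5/8) ∈ ℝ² with the Euclidean metric. Then for all points x, y ∈ [−1/4, 1/4] × [−1/4, 1/4], the Euclidean angle ∠ x o y at the vertex o is strictly less than π/4. -/

import Mathlib

lemma aux_key (a b c d : ℝ) (ha : a ∈ Set.Icc (3/8 : ℝ) (7/8))
    (hb : b ∈ Set.Icc (3/8 : ℝ) (7/8)) (hc : c ∈ Set.Icc (3/8 : ℝ) (7/8))
    (hd : d ∈ Set.Icc (3/8 : ℝ) (7/8)) :
    Real.sqrt 2 / 2 < (a*c + b*d) / (Real.sqrt (a^2+b^2) * Real.sqrt (c^2+d^2)) := by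
  obtain ⟨ha1, ha2⟩ := ha; obtain ⟨hb1, hb2⟩ := hb
  obtain ⟨hc1, hc2⟩ := hc; obtain ⟨hd1, hd2⟩ := hd
  have P1 : 0 < a*(c+d) - b*(c-d) := by nlinarith [mul_nonneg (sub_nonneg.2 ha1) (by linarith : (0:ℝ) ≤ c + d), mul_nonneg (sub_nonneg.2 hb1) (by linarith : (0:ℝ) ≤ c + d)]
  have P2 : 0 < a*(c-d) + b*(c+d) := by nlinarith [mul_nonneg (sub_nonneg.2 ha1) (by linarith : (0:ℝ) ≤ c + d), mul_nonneg (sub_nonneg.2 hb1) (by linarith : (0:ℝ) ≤ c + d)]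
  have hI : 0 < a*c + b*d := by nlinarith
  have hN1 : 0 < Real.sqrt (a^2+b^2) := Real.sqrt_pos.2 (by nlinarith)
  have hN2 : 0 < Real.sqrt (c^2+d^2) := Real.sqrt_pos.2 (by nlinarith)
  rw [div_lt_div_iff₀ (by norm_num) (by positivity)]
  have h2 : Real.sqrt 2 * (Real.sqrt (a^2+b^2) * Real.sqrt (c^2+d^2))
      = Real.sqrt (2 * ((a^2+b^2) * (c^2+d^2))) := by
    rw [Real.sqrt_mul (by norm_num), Real.sqrt_mul (by positivity)]
  have key : Real.sqrt (2 * ((a^2+b^2) * (c^2+d^2))) < 2 * (a*c + b*d) := by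
    rw [show (2 : ℝ) * (a*c+b*d) = (a*c+b*d) * 2 by ring]
    rw [Real.sqrt_lt' (by linarith)]
    nlinarith [mul_pos P1 P2]
  calc Real.sqrt 2 * (Real.sqrt (a^2+b^2) * Real.sqrt (c^2+d^2))
      = Real.sqrt (2 * ((a^2+b^2) * (c^2+d^2))) := h2
    _ < 2 * (a*c+b*d) := key
    _ = (a*c+b*d) * 2 := by ring

theorem stmt_15 (o x y : EuclideanSpace ℝ (Fin 2))
    (ho0 : o 0 = 5 / 8) (ho1 : o 1 = 5 / 8)
    (hx0 : x 0 ∈ Set.Icc (-(1 / 4) : ℝ) (1 / 4))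
    (hx1 : x 1 ∈ Set.Icc (-(1 / 4) : ℝ) (1 / 4))
    (hy0 : y 0 ∈ Set.Icc (-(1 / 4) : ℝ) (1 / 4))
    (hy1 : y 1 ∈ Set.Icc (-(1 / 4) : ℝ) (1 / 4)) :
    EuclideanGeometry.angle x o y < Real.pi / 4 := by
  have hang := EuclideanGeometry.angle_nonneg x o y
  have hang2 := EuclideanGeometry.angle_le_pi x o y
  have hxo : x ≠ o := by
    intro h; rw [h] at hx0; rw [ho0] at hx0; have := hx0.2; norm_num at this
  have hyo : y ≠ o := by
    intro h; rw [h] at hy0; rw [ho0] at hy0; have := hy0.2; norm_num at this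
  have hcos : Real.cos (EuclideanGeometry.angle x o y)
      = inner ℝ (x - o) (y - o) / (‖x - o‖ * ‖y - o‖) := by
    rw [EuclideanGeometry.angle, InnerProductGeometry.cos_angle, vsub_eq_sub, vsub_eq_sub]
  have hin : (inner ℝ (x - o) (y - o) : ℝ)
      = (x 0 - o 0) * (y 0 - o 0) + (x 1 - o 1) * (y 1 - o 1) := by
    simp [PiLp.inner_apply, Fin.sum_univ_two, PiLp.sub_apply, mul_comm]
  have hnx : ‖x - o‖ = Real.sqrt ((x 0 - o 0)^2 + (x 1 - o 1)^2) := by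
    rw [EuclideanSpace.norm_eq]
    simp [Fin.sum_univ_two, PiLp.sub_apply, sq_abs]
  have hny : ‖y - o‖ = Real.sqrt ((y 0 - o 0)^2 + (y 1 - o 1)^2) := by
    rw [EuclideanSpace.norm_eq]
    simp [Fin.sum_univ_two, PiLp.sub_apply, sq_abs]
  have hkey : Real.sqrt 2 / 2 < Real.cos (EuclideanGeometry.angle x o y) := by
    rw [hcos, hin, hnx, hny, ho0, ho1]
    have h := aux_key (-(x 0 - 5/8)) (-(x 1 - 5/8)) (-(y 0 - 5/8)) (-(y 1 - 5/8))
      ⟨by linarith [hx0.2], by linarith [hx0.1]⟩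
      ⟨by linarith [hx1.2], by linarith [hx1.1]⟩
      ⟨by linarith [hy0.2], by linarith [hy0.1]⟩
      ⟨by linarith [hy1.2], by linarith [hy1.1]⟩
    simp only [neg_sub] at h
    convert h using 3 <;> ring
  have hcospi : Real.cos (Real.pi / 4) = Real.sqrt 2 / 2 := Real.cos_pi_div_four
  have hm1 : EuclideanGeometry.angle x o y ∈ Set.Icc 0 Real.pi := ⟨hang, hang2⟩
  have hm2 : Real.pi / 4 ∈ Set.Icc 0 Real.pi := by
    constructor <;> nlinarith [Real.pi_pos]
  exact (Real.strictAntiOn_cos.lt_iff_gt hm2 hm1).1 (by rw [hcospi]; exact hkey)
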